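/- If X_1, ..., X_5 are jointly distributed {-1,+1}-valued random variables such that Pr[X_i = 1, X_{i⊕1} = 1] = 0 for all i (cyclically), then Σ_{i=1}^5 Pr[X_i = 1] ≤ 2 (the KCBS inequality). -/

import Mathlib

open MeasureTheory

lemma kcbs_card_aux : ∀ S : Finset (Fin 5),
    (∀ i : Fin 5, ¬(i ∈ S ∧ i + 1 ∈ S)) → S.card ≤ 2 := by decide

/-- The KCBS inequality: five jointly distributed `±1`-valued random variables
satisfying the cyclic exclusivity conditions satisfy `Σ Pr[X_i = 1] ≤ 2`. -/
theorem kcbs_inequality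
    {Ω : Type*} [MeasurableSpace Ω] (μ : Measure Ω) [IsProbabilityMeasure μ]
    (X : Fin 5 → Ω → ℝ)
    (hpm : ∀ i ω, X i ω = 1 ∨ X i ω = -1)
    (hm : ∀ i, Measurable (X i))
    (hexcl : ∀ i : Fin 5, μ {ω | X i ω = 1 ∧ X (i + 1) ω = 1} = 0) :
    ∑ i : Fin 5, (μ {ω | X i ω = 1}).toReal ≤ 2 := by
  classical
  set A : Fin 5 → Set Ω := fun i => {ω | X i ω = 1} with hA
  have hAm : ∀ i, MeasurableSet (A i) := fun i => (hm i) (measurableSet_singleton 1)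
  have hint : ∀ i, Integrable ((A i).indicator (fun _ => (1:ℝ))) μ :=
    fun i => (integrable_const (1:ℝ)).indicator (hAm i)
  have h1 : ∀ i, (μ (A i)).toReal = ∫ ω, (A i).indicator (fun _ => (1:ℝ)) ω ∂μ := by
    intro i
    rw [integral_indicator_const _ (hAm i)]
    simp
    rfl
  have hae : ∀ᵐ ω ∂μ, ∀ i : Fin 5, ¬(X i ω = 1 ∧ X (i + 1) ω = 1) := by
    rw [ae_all_iff]
    intro i
    rw [ae_iff]
    simpa [not_not] using hexcl i
  have hbound : ∀ᵐ ω ∂μ, ∑ i : Fin 5, (A i).indicator (fun _ => (1:ℝ)) ω ≤ 2 := by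
    filter_upwards [hae] with ω hω
    have hcard : (Finset.univ.filter (fun i : Fin 5 => X i ω = 1)).card ≤ 2 := by
      apply kcbs_card_aux
      intro i hi
      exact hω i ⟨(Finset.mem_filter.mp hi.1).2, (Finset.mem_filter.mp hi.2).2⟩
    have : ∑ i : Fin 5, (A i).indicator (fun _ => (1:ℝ)) ω
        = ((Finset.univ.filter (fun i : Fin 5 => X i ω = 1)).card : ℝ) := by
      rw [← Finset.sum_boole]
      refine Finset.sum_congr rfl fun i _ => ?_
      simp [Set.indicator_apply, hA, Set.mem_setOf_eq]
    rw [this]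
    exact_mod_cast le_trans (Nat.cast_le.mpr hcard) (by norm_num : ((2:ℕ):ℝ) ≤ 2)
  calc ∑ i : Fin 5, (μ (A i)).toReal
      = ∫ ω, ∑ i : Fin 5, (A i).indicator (fun _ => (1:ℝ)) ω ∂μ := by
        rw [integral_finset_sum _ (fun i _ => hint i)]
        exact Finset.sum_congr rfl fun i _ => h1 i
    _ ≤ ∫ _ω, (2:ℝ) ∂μ :=
        integral_mono_ae (integrable_finset_sum _ (fun i _ => hint i))
          (integrable_const 2) hbound
    _ = 2 := by simp
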